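/- Existence and uniqueness of the base point: let M be a smooth manifold without boundary modeled on ℝ^n (finite-dimensional), Hausdorff and second countable, let A be a real Weil algebra, and let ψ : C^∞(M) → A be a unital ℝ-algebra homomorphism. Then there exists a unique point x ∈ M such that ψ(f) − f(x)·1_A is nilpotent for every f ∈ C^∞(M). -/

import Mathlib

open scoped Manifold
open Set Function

theorem weil_unique_const {A : Type*} [CommRing A] [Algebra ℝ A] [Nontrivial A]
    {a : A} {c c' : ℝ} (h : IsNilpotent (a - algebraMap ℝ A c))
    (h' : IsNilpotent (a - algebraMap ℝ A c')) : c = c' := by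
  have hn : IsNilpotent (algebraMap ℝ A (c' - c)) := by
    have h2 := (Commute.all (a - algebraMap ℝ A c) (a - algebraMap ℝ A c')).isNilpotent_sub h h'
    have e : (a - algebraMap ℝ A c) - (a - algebraMap ℝ A c') = algebraMap ℝ A (c' - c) := by
      rw [map_sub]; ring
    rwa [e] at h2
  obtain ⟨k, hk⟩ := hn
  rw [← map_pow] at hk
  have hinj : Function.Injective (algebraMap ℝ A) := (algebraMap ℝ A).injective
  have hk' : (c' - c) ^ k = 0 := hinj (by rw [hk, map_zero])
  have : c' - c = 0 := pow_eq_zero_iff'.mp hk' |>.1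
  linarith [sub_eq_zero.mp this]

theorem milnor_char_eq_eval {n : ℕ} {M : Type*} [TopologicalSpace M]
    [ChartedSpace (EuclideanSpace ℝ (Fin n)) M]
    [IsManifold (𝓡 n) (⊤ : ℕ∞) M] [T2Space M] [SecondCountableTopology M]
    (φ : C^(⊤ : ℕ∞)⟮𝓡 n, M; ℝ⟯ →+* ℝ) :
    ∃ x : M, ∀ f : C^(⊤ : ℕ∞)⟮𝓡 n, M; ℝ⟯, φ f = f x := by
  haveI : LocallyCompactSpace M :=
    ChartedSpace.locallyCompactSpace (EuclideanSpace ℝ (Fin n)) M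
  haveI : SigmaCompactSpace M := inferInstance
  by_contra hcon
  push_neg at hcon
  -- constants are preserved
  have hconst : ∀ c : ℝ, φ (algebraMap ℝ C^(⊤ : ℕ∞)⟮𝓡 n, M; ℝ⟯ c) = c := by
    intro c
    have : φ.comp (algebraMap ℝ C^(⊤ : ℕ∞)⟮𝓡 n, M; ℝ⟯) = RingHom.id ℝ :=
      Subsingleton.elim _ _
    exact RingHom.congr_fun this c
  -- for each point a function in the kernel of φ positive at that point
  choose gf hgf using hcon
  set g : M → C^(⊤ : ℕ∞)⟮𝓡 n, M; ℝ⟯ :=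
    fun x => (gf x - algebraMap ℝ C^(⊤ : ℕ∞)⟮𝓡 n, M; ℝ⟯ (φ (gf x))) ^ 2 with hg
  have hgapp : ∀ x y, g x y = (gf x y - φ (gf x)) ^ 2 := fun x y => rfl
  have hg0 : ∀ x, φ (g x) = 0 := by
    intro x
    rw [hg]
    simp only [map_pow, map_sub, hconst, sub_self]
    ring
  have hgnonneg : ∀ x y, 0 ≤ g x y := by
    intro x y; rw [hgapp]; positivity
  have hgpos : ∀ x, 0 < g x x := by
    intro x; rw [hgapp]
    have hne : gf x x - φ (gf x) ≠ 0 := sub_ne_zero.mpr fun h => hgf x h.symm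
    positivity
  -- compact exhaustion and a proper smooth function
  set K := CompactExhaustion.choice M with hK
  have hex : ∀ k : ℕ, ∃ f : C^(⊤ : ℕ∞)⟮𝓡 n, M; ℝ⟯,
      EqOn f 0 (K (k+1)) ∧ EqOn f 1 (interior (K (k+2)))ᶜ ∧ ∀ x, f x ∈ Icc (0:ℝ) 1 :=
    fun k => exists_contMDiffMap_zero_one_of_isClosed (𝓡 n) ((K.isCompact _).isClosed)
      isOpen_interior.isClosed_compl
      (disjoint_left.mpr fun x hx hx' => hx' (K.subset_interior_succ _ hx))
  choose b hb0 hb1 hb01 using hex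
  have hLF : LocallyFinite fun k : ℕ => support (b k : M → ℝ) := by
    intro x
    refine ⟨interior (K (K.find x + 1)),
      isOpen_interior.mem_nhds (K.subset_interior_succ _ (K.mem_find x)), ?_⟩
    apply Set.Finite.subset (Set.finite_Iio (K.find x + 1))
    intro k hk
    simp only [mem_setOf_eq] at hk
    by_contra hklt
    simp only [mem_Iio, not_lt] at hklt
    obtain ⟨y, hy1, hy2⟩ := hk
    have hyK : y ∈ K (k+1) := K.subset (by omega) (interior_subset hy2)
    exact hy1 (hb0 k hyK)
  have hsm : ContMDiff (𝓡 n) 𝓘(ℝ) ((⊤ : ℕ∞) : WithTop ℕ∞) fun y : M => ∑ᶠ k, b k y :=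
    contMDiff_finsum (fun k => (b k).contMDiff) hLF
  set H : C^(⊤ : ℕ∞)⟮𝓡 n, M; ℝ⟯ := ⟨fun y => ∑ᶠ k, b k y, hsm⟩ with hHdef
  have hHapp : ∀ y, H y = ∑ᶠ k, b k y := fun y => rfl
  have hps : ∀ y : M, (support fun k => b k y).Finite := by
    intro y
    apply Set.Finite.subset (Set.finite_Iio (K.find y))
    intro k hk
    by_contra h'
    simp only [mem_Iio, not_lt] at h'
    exact hk (hb0 k (K.subset (by omega) (K.mem_find y)))
  have hlow : ∀ m : ℕ, ∀ y, y ∉ K (m+2) → (m+1 : ℝ) ≤ H y := by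
    intro m y hy
    have h1 : ∀ k ≤ m, b k y = 1 := by
      intro k hk
      refine hb1 k fun hmem => hy (K.subset (by omega) (interior_subset hmem))
    have e1 : (m+1:ℝ) = ∑ k ∈ Finset.range (m+1), b k y := by
      rw [Finset.sum_congr rfl fun k hk => h1 k (Finset.mem_range_succ_iff.mp hk)]
      simp
    rw [hHapp, e1]
    rw [finsum_eq_finset_sum_of_support_subset (fun k => b k y)
      (s := (hps y).toFinset ∪ Finset.range (m+1))
      (by intro k hk; simp only [Finset.coe_union, Set.Finite.coe_toFinset, mem_union]
          exact Or.inl hk)]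
    exact Finset.sum_le_sum_of_subset_of_nonneg Finset.subset_union_right
      fun i _ _ => (hb01 i y).1
  -- the contradiction
  set c := φ H with hc
  set m := ⌈|c|⌉₊ with hm
  set G₀ : C^(⊤ : ℕ∞)⟮𝓡 n, M; ℝ⟯ :=
    (H - algebraMap ℝ C^(⊤ : ℕ∞)⟮𝓡 n, M; ℝ⟯ c) ^ 2 with hG₀
  have hG₀app : ∀ y, G₀ y = (H y - c) ^ 2 := fun y => rfl
  have hφG₀ : φ G₀ = 0 := by
    rw [hG₀, map_pow, map_sub, hconst, sub_self]; ring
  have hG₀big : ∀ y, y ∉ K (m+2) → 1 ≤ G₀ y := by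
    intro y hy
    have h1 : (m+1:ℝ) ≤ H y := hlow m y hy
    have h2 : c ≤ (m:ℝ) := le_trans (le_abs_self c) (Nat.le_ceil _)
    rw [hG₀app]; nlinarith
  obtain ⟨t, ht⟩ := (K.isCompact (m+2)).elim_finite_subcover
    (fun x : M => {y | 0 < g x y})
    (fun x => isOpen_lt continuous_const (g x).contMDiff.continuous)
    (fun y hy => mem_iUnion.mpr ⟨y, hgpos y⟩)
  set G : C^(⊤ : ℕ∞)⟮𝓡 n, M; ℝ⟯ := G₀ + ∑ x ∈ t, g x with hG
  have hGapp : ∀ y, G y = G₀ y + ∑ x ∈ t, g x y := by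
    intro y
    have hcoe : ((∑ x ∈ t, g x : C^(⊤ : ℕ∞)⟮𝓡 n, M; ℝ⟯) : M → ℝ)
        = ∑ x ∈ t, (g x : M → ℝ) := map_sum ContMDiffMap.coeFnAddMonoidHom g t
    calc G y = G₀ y + (∑ x ∈ t, g x : C^(⊤ : ℕ∞)⟮𝓡 n, M; ℝ⟯) y := rfl
      _ = G₀ y + ∑ x ∈ t, g x y := by rw [hcoe]; simp [Finset.sum_apply]
  have hφG : φ G = 0 := by
    rw [hG, map_add, hφG₀, map_sum]
    simp [hg0]
  have hGpos : ∀ y, 0 < G y := by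
    intro y
    rw [hGapp]
    have hsum_nonneg : 0 ≤ ∑ x ∈ t, g x y := Finset.sum_nonneg fun i _ => hgnonneg i y
    by_cases hy : y ∈ K (m+2)
    · obtain ⟨x, hxt, hxy⟩ := mem_iUnion₂.mp (ht hy)
      have hpos : 0 < ∑ x ∈ t, g x y :=
        Finset.sum_pos' (fun i _ => hgnonneg i y) ⟨x, hxt, hxy⟩
      have : (0:ℝ) ≤ G₀ y := by rw [hG₀app]; positivity
      linarith
    · have := hG₀big y hy
      linarith
  set Ginv : C^(⊤ : ℕ∞)⟮𝓡 n, M; ℝ⟯ :=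
    ⟨fun y => (G y)⁻¹, G.contMDiff.inv₀ fun y => (hGpos y).ne'⟩ with hGinv
  have hmul : G * Ginv = 1 := by
    ext y
    exact mul_inv_cancel₀ (hGpos y).ne'
  have h1 := congrArg φ hmul
  rw [map_mul, map_one, hφG, zero_mul] at h1
  exact one_ne_zero h1.symm

/-- **Existence and uniqueness of the base point**: for every unital `ℝ`-algebra
homomorphism `ψ : C^∞(M) → A` into a real Weil algebra `A` there is a unique point
`x ∈ M` such that `ψ f - f x · 1` is nilpotent for every smooth function `f`. -/
theorem base_point_exists_unique {n : ℕ} {M : Type*} [TopologicalSpace M]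
    [ChartedSpace (EuclideanSpace ℝ (Fin n)) M]
    [IsManifold (𝓡 n) (⊤ : ℕ∞) M] [T2Space M] [SecondCountableTopology M]
    (A : Type*) [CommRing A] [Algebra ℝ A] [Nontrivial A] [FiniteDimensional ℝ A]
    (hA : ∀ a : A, ∃ c : ℝ, IsNilpotent (a - algebraMap ℝ A c))
    (ψ : C^(⊤ : ℕ∞)⟮𝓡 n, M; ℝ⟯ →ₐ[ℝ] A) :
    ∃! x : M, ∀ f : C^(⊤ : ℕ∞)⟮𝓡 n, M; ℝ⟯,
      IsNilpotent (ψ f - algebraMap ℝ A (f x)) := by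
  haveI : LocallyCompactSpace M :=
    ChartedSpace.locallyCompactSpace (EuclideanSpace ℝ (Fin n)) M
  haveI : SigmaCompactSpace M := inferInstance
  choose phi hphi using fun f => hA (ψ f)
  have phi_one : phi 1 = 1 :=
    weil_unique_const (hphi 1) (by rw [map_one, map_one, sub_self]; exact IsNilpotent.zero)
  have phi_zero : phi 0 = 0 :=
    weil_unique_const (hphi 0) (by rw [map_zero, map_zero, sub_self]; exact IsNilpotent.zero)
  have phi_add : ∀ f g, phi (f + g) = phi f + phi g := by
    intro f g
    refine weil_unique_const (hphi (f + g)) ?_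
    have e : ψ (f + g) - algebraMap ℝ A (phi f + phi g)
        = (ψ f - algebraMap ℝ A (phi f)) + (ψ g - algebraMap ℝ A (phi g)) := by
      rw [map_add, map_add]; ring
    rw [e]
    exact (Commute.all _ _).isNilpotent_add (hphi f) (hphi g)
  have phi_mul : ∀ f g, phi (f * g) = phi f * phi g := by
    intro f g
    refine weil_unique_const (hphi (f * g)) ?_
    have e : ψ (f * g) - algebraMap ℝ A (phi f * phi g)
        = (ψ f - algebraMap ℝ A (phi f)) * ψ g
          + algebraMap ℝ A (phi f) * (ψ g - algebraMap ℝ A (phi g)) := by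
      rw [map_mul, map_mul]; ring
    rw [e]
    exact (Commute.all _ _).isNilpotent_add
      ((Commute.all _ _).isNilpotent_mul_right (hphi f))
      ((Commute.all _ _).isNilpotent_mul_left (hphi g))
  let Φ : C^(⊤ : ℕ∞)⟮𝓡 n, M; ℝ⟯ →+* ℝ :=
    { toFun := phi, map_one' := phi_one, map_mul' := phi_mul,
      map_zero' := phi_zero, map_add' := phi_add }
  obtain ⟨x, hx⟩ := milnor_char_eq_eval Φ
  have hbase : ∀ f : C^(⊤ : ℕ∞)⟮𝓡 n, M; ℝ⟯, IsNilpotent (ψ f - algebraMap ℝ A (f x)) := by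
    intro f
    have : phi f = f x := hx f
    rw [← this]
    exact hphi f
  refine ⟨x, hbase, ?_⟩
  intro y hy
  by_contra hxy
  obtain ⟨f, hf0, hf1, -⟩ := exists_contMDiffMap_zero_one_of_isClosed (𝓡 n)
    (isClosed_singleton (x := y)) (isClosed_singleton (x := x))
    (Set.disjoint_singleton.mpr hxy)
  have hfy : f y = 0 := hf0 (mem_singleton y)
  have hfx : f x = 1 := hf1 (mem_singleton x)
  have h01 : (1 : ℝ) = 0 := by
    have := weil_unique_const (hbase f) (hy f)
    rw [hfx, hfy] at this
    exact this
  exact one_ne_zero h01
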